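/- Every countable strongly annihilated ideal I of C(X) is a z-ideal whose family of zero-sets Z[I] = {Z(f) : f ∈ I} is closed under countable intersection; in particular, I is strongly divisible. -/
import Mathlib


open ContinuousMap

/-- An ideal `I` is countable strongly annihilated if for each countable subset `S ⊆ I`
and each `b ∉ I` there exists `c` with `c * a = 0` for all `a ∈ S` but `c * b ≠ 0`. -/
def CountableStronglyAnnihilated {R : Type*} [CommRing R] (I : Ideal R) : Prop :=
  ∀ S : Set R, S.Countable → S ⊆ I → ∀ b ∉ I, ∃ c : R, (∀ a ∈ S, c * a = 0) ∧ c * b ≠ 0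

namespace Stmt14Aux

variable {X : Type*} [TopologicalSpace X]

/-- The `n`-th term of the series defining the common divisor. -/
noncomputable def term (a : ℕ → C(X, ℝ)) (n : ℕ) (x : X) : ℝ :=
  (1 / 2 : ℝ) ^ n * Real.sqrt (min |a n x| 1)

lemma term_nonneg (a : ℕ → C(X, ℝ)) (n : ℕ) (x : X) : 0 ≤ term a n x := by
  unfold term; positivity

lemma term_le (a : ℕ → C(X, ℝ)) (n : ℕ) (x : X) : term a n x ≤ (1 / 2 : ℝ) ^ n := by
  have h1 : Real.sqrt (min |a n x| 1) ≤ 1 := by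
    calc Real.sqrt (min |a n x| 1) ≤ Real.sqrt 1 := Real.sqrt_le_sqrt (min_le_right _ _)
      _ = 1 := Real.sqrt_one
  calc term a n x ≤ (1 / 2 : ℝ) ^ n * 1 :=
        mul_le_mul_of_nonneg_left h1 (by positivity)
    _ = (1 / 2 : ℝ) ^ n := mul_one _

lemma term_continuous (a : ℕ → C(X, ℝ)) (n : ℕ) : Continuous (term a n) :=
  continuous_const.mul
    (Real.continuous_sqrt.comp (((a n).continuous.abs).min continuous_const))

lemma term_summable (a : ℕ → C(X, ℝ)) (x : X) : Summable (fun n => term a n x) :=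
  Summable.of_nonneg_of_le (fun n => term_nonneg a n x) (fun n => term_le a n x)
    (summable_geometric_of_lt_one (by norm_num) (by norm_num))

/-- The common divisor function. -/
noncomputable def cF (a : ℕ → C(X, ℝ)) : C(X, ℝ) :=
  ⟨fun x => ∑' n, term a n x, by
    refine continuous_tsum (u := fun n : ℕ => (1 / 2 : ℝ) ^ n) (term_continuous a)
      (summable_geometric_of_lt_one (by norm_num) (by norm_num)) (fun n x => ?_)
    rw [Real.norm_eq_abs, abs_of_nonneg (term_nonneg a n x)]
    exact term_le a n x⟩

lemma cF_nonneg (a : ℕ → C(X, ℝ)) (x : X) : 0 ≤ cF a x :=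
  tsum_nonneg (fun n => term_nonneg a n x)

lemma term_le_cF (a : ℕ → C(X, ℝ)) (n : ℕ) (x : X) : term a n x ≤ cF a x :=
  Summable.le_tsum (term_summable a x) n (fun j _ => term_nonneg a j x)

lemma cF_eq_zero_iff (a : ℕ → C(X, ℝ)) (x : X) : cF a x = 0 ↔ ∀ n, a n x = 0 := by
  constructor
  · intro h n
    have h1 : term a n x = 0 :=
      le_antisymm (h ▸ term_le_cF a n x) (term_nonneg a n x)
    unfold term at h1
    have h2 : Real.sqrt (min |a n x| 1) = 0 := by
      have hp : (1 / 2 : ℝ) ^ n ≠ 0 := by positivity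
      exact (mul_eq_zero.1 h1).resolve_left hp
    have h3 : min |a n x| 1 = 0 :=
      (Real.sqrt_eq_zero (le_min (abs_nonneg _) zero_le_one)).1 h2
    by_contra hne
    have : (0 : ℝ) < min |a n x| 1 := lt_min (abs_pos.2 hne) one_pos
    linarith
  · intro h
    show (∑' n, term a n x) = 0
    have : ∀ n, term a n x = 0 := by
      intro n; unfold term; rw [h n]; simp
    simp [this]

/-- Key pointwise bound for the quotient where `|a n x| < 1`. -/
lemma key_bound (a : ℕ → C(X, ℝ)) (n : ℕ) (x : X) (hx : |a n x| < 1) :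
    |if cF a x = 0 then 0 else a n x / cF a x| ≤ 2 ^ n * Real.sqrt |a n x| := by
  split_ifs with hc
  · simp only [abs_zero]; positivity
  · have hcpos : 0 < cF a x := (cF_nonneg a x).lt_of_ne (Ne.symm hc)
    by_cases hA : a n x = 0
    · simp only [hA, zero_div, abs_zero]; positivity
    · have h1 : (1 / 2 : ℝ) ^ n * Real.sqrt |a n x| ≤ cF a x := by
        have h := term_le_cF a n x
        rwa [term, min_eq_left hx.le] at h
      have hs : 0 < Real.sqrt |a n x| := Real.sqrt_pos.2 (abs_pos.2 hA)
      rw [abs_div, abs_of_pos hcpos, div_le_iff₀ hcpos]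
      have heq : |a n x| = (2 ^ n * Real.sqrt |a n x|) * ((1 / 2 : ℝ) ^ n * Real.sqrt |a n x|) := by
        have hmul : (2 : ℝ) ^ n * (1 / 2 : ℝ) ^ n = 1 := by
          rw [← mul_pow]; norm_num
        have hsq : Real.sqrt |a n x| * Real.sqrt |a n x| = |a n x| :=
          Real.mul_self_sqrt (abs_nonneg _)
        calc |a n x| = ((2 : ℝ) ^ n * (1 / 2 : ℝ) ^ n) * (Real.sqrt |a n x| * Real.sqrt |a n x|) := by
              rw [hmul, hsq, one_mul]
          _ = (2 ^ n * Real.sqrt |a n x|) * ((1 / 2 : ℝ) ^ n * Real.sqrt |a n x|) := by ring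
      calc |a n x| = (2 ^ n * Real.sqrt |a n x|) * ((1 / 2 : ℝ) ^ n * Real.sqrt |a n x|) := heq
        _ ≤ (2 ^ n * Real.sqrt |a n x|) * cF a x :=
            mul_le_mul_of_nonneg_left h1
              (mul_nonneg (pow_nonneg (by norm_num : (0:ℝ) ≤ 2) n) (Real.sqrt_nonneg _))

lemma bF_continuous (a : ℕ → C(X, ℝ)) (n : ℕ) :
    Continuous fun x => if cF a x = 0 then 0 else a n x / cF a x := by
  rw [continuous_iff_continuousAt]
  intro x₀
  by_cases h : cF a x₀ = 0
  · have ha0 : a n x₀ = 0 := (cF_eq_zero_iff a x₀).1 h n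
    have hval : (if cF a x₀ = 0 then (0:ℝ) else a n x₀ / cF a x₀) = 0 := if_pos h
    rw [ContinuousAt, hval]
    have hupper : Filter.Tendsto (fun x => 2 ^ n * Real.sqrt |a n x|) (nhds x₀) (nhds 0) := by
      have hcont : Continuous fun x => (2:ℝ) ^ n * Real.sqrt |a n x| :=
        continuous_const.mul (Real.continuous_sqrt.comp (a n).continuous.abs)
      have := hcont.tendsto x₀
      simpa [ha0] using this
    have hlower : Filter.Tendsto (fun x => -(2 ^ n * Real.sqrt |a n x|)) (nhds x₀) (nhds 0) := by
      simpa using hupper.neg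
    have hev : ∀ᶠ x in nhds x₀, |a n x| < 1 := by
      have : ContinuousAt (fun x => |a n x|) x₀ := ((a n).continuous.abs).continuousAt
      have h01 : |a n x₀| < 1 := by rw [ha0]; simp
      exact this.eventually_lt continuousAt_const h01
    refine tendsto_of_tendsto_of_tendsto_of_le_of_le' hlower hupper ?_ ?_
    · filter_upwards [hev] with x hx
      have := key_bound a n x hx
      exact neg_le_of_abs_le this
    · filter_upwards [hev] with x hx
      exact le_of_abs_le (key_bound a n x hx)
  · have hev : ∀ᶠ x in nhds x₀, cF a x ≠ 0 :=
      ((cF a).continuous.continuousAt).eventually_ne h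
    have hca : ContinuousAt (fun x => a n x / cF a x) x₀ :=
      ((a n).continuous.continuousAt).div ((cF a).continuous.continuousAt) h
    refine hca.congr ?_
    filter_upwards [hev] with x hx
    exact (if_neg hx).symm

/-- The quotient function, bundled. -/
noncomputable def bF (a : ℕ → C(X, ℝ)) (n : ℕ) : C(X, ℝ) :=
  ⟨fun x => if cF a x = 0 then 0 else a n x / cF a x, bF_continuous a n⟩

lemma cF_mul_bF (a : ℕ → C(X, ℝ)) (n : ℕ) : a n = cF a * bF a n := by
  ext x
  show a n x = cF a x * (if cF a x = 0 then 0 else a n x / cF a x)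
  split_ifs with hc
  · rw [(cF_eq_zero_iff a x).1 hc n, hc, mul_zero]
  · field_simp

/-- Membership criterion from the annihilation property. -/
lemma mem_of_coz_subset (I : Ideal C(X, ℝ)) (hI : CountableStronglyAnnihilated I)
    (a : ℕ → C(X, ℝ)) (ha : ∀ n, a n ∈ I) (g : C(X, ℝ))
    (hg : ∀ x, g x ≠ 0 → ∃ n, a n x ≠ 0) : g ∈ I := by
  by_contra h
  obtain ⟨c, hc1, hc2⟩ := hI (Set.range a) (Set.countable_range a)
    (by rintro _ ⟨n, rfl⟩; exact ha n) g h
  apply hc2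
  ext x
  show c x * g x = 0
  by_cases hgx : g x = 0
  · rw [hgx, mul_zero]
  · obtain ⟨n, hn⟩ := hg x hgx
    have := hc1 (a n) ⟨n, rfl⟩
    have hx : c x * a n x = 0 := by
      have : (c * a n) x = (0 : C(X, ℝ)) x := by rw [this]
      simpa using this
    have hcx : c x = 0 := by
      rcases mul_eq_zero.1 hx with h' | h'
      · exact h'
      · exact absurd h' hn
    rw [hcx, zero_mul]

end Stmt14Aux

open Stmt14Aux in
/-- Every countable strongly annihilated ideal of `C(X)` is a `z`-ideal whose family of
zero-sets is closed under countable intersection; in particular it is strongly divisible. -/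
theorem stmt14 {X : Type*} [TopologicalSpace X] [T2Space X] [CompletelyRegularSpace X]
    (I : Ideal C(X, ℝ)) (hI : CountableStronglyAnnihilated I) :
    (∀ f ∈ I, ∀ g : C(X, ℝ), {x | f x = 0} = {x | g x = 0} → g ∈ I) ∧
    (∀ f : ℕ → C(X, ℝ), (∀ n, f n ∈ I) →
      ∃ g ∈ I, {x | g x = 0} = ⋂ n, {x | f n x = 0}) ∧
    (∀ a : ℕ → C(X, ℝ), (∀ n, a n ∈ I) →
      ∃ c ∈ I, ∀ n, ∃ b : C(X, ℝ), a n = c * b) := by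
  refine ⟨?_, ?_, ?_⟩
  · -- z-ideal
    intro f hf g hz
    exact mem_of_coz_subset I hI (fun _ => f) (fun _ => hf) g (fun x hx => by
      refine ⟨0, fun hfx => hx ?_⟩
      have : x ∈ {x | f x = 0} := hfx
      rw [hz] at this
      exact this)
  · -- countable intersection of zero sets
    intro f hf
    refine ⟨cF f, ?_, ?_⟩
    · exact mem_of_coz_subset I hI f hf (cF f) (fun x hx => by
        by_contra hne
        push_neg at hne
        exact hx ((cF_eq_zero_iff f x).2 hne))
    · ext x
      simp only [Set.mem_setOf_eq, Set.mem_iInter]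
      exact cF_eq_zero_iff f x
  · -- strong divisibility
    intro a ha
    refine ⟨cF a, ?_, fun n => ⟨bF a n, cF_mul_bF a n⟩⟩
    exact mem_of_coz_subset I hI a ha (cF a) (fun x hx => by
      by_contra hne
      push_neg at hne
      exact hx ((cF_eq_zero_iff a x).2 hne))
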